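/- If a ≤ m + b - 1, then Σ_{j=b}^{a} ⟨b choose j⟩_m = C(a, b), where ⟨b choose j⟩_m is the number of compositions of j into b parts each in {1,...,m}. -/

import Mathlib

/-- `extBinom b a m` is the number of compositions of `a` into exactly `b` parts,
each part lying in `{1,...,m}`. -/
def extBinom (b : ℕ) (a : ℤ) (m : ℕ) : ℕ :=
  ((Fintype.piFinset fun _ : Fin b => Finset.Icc 1 m).filter fun v : Fin b → ℕ =>
    (∑ i, (v i : ℤ)) = a).card

lemma sym_univ_eq (b n : ℕ) : (Finset.univ : Finset (Fin b)).sym n = Finset.univ := by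
  ext s; simp [Finset.mem_sym_iff]

lemma stars_bars (b n : ℕ) :
    (Finset.piAntidiag (Finset.univ : Finset (Fin b)) n).card = (n + b - 1).choose n := by
  rw [← Finset.map_sym_eq_piAntidiag, Finset.card_map, sym_univ_eq, Finset.card_univ,
    Sym.card_sym_eq_choose]
  simp [Nat.add_comm]

lemma extBinom_eq (b m j : ℕ) (hb : 1 ≤ b) (hm : 1 ≤ m) (hj : b ≤ j) (hjm : j ≤ m + b - 1) :
    extBinom b (j : ℤ) m = (j - 1).choose (b - 1) := by
  have key : ((Fintype.piFinset fun _ : Fin b => Finset.Icc 1 m).filter fun v : Fin b → ℕ =>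
      (∑ i, (v i : ℤ)) = (j : ℤ)).card
      = (Finset.piAntidiag (Finset.univ : Finset (Fin b)) (j - b)).card := by
    refine Finset.card_nbij' (fun v => fun k => v k - 1) (fun w => fun k => w k + 1)
      ?_ ?_ ?_ ?_
    · intro v hv
      simp only [Finset.mem_coe, Finset.mem_filter, Fintype.mem_piFinset, Finset.mem_Icc] at hv
      obtain ⟨h1, h2⟩ := hv
      have hsum : ∑ i, v i = j := by exact_mod_cast h2
      have hs2 : (∑ k, (v k - 1)) + b = j := by
        have he : ∑ k, ((v k - 1) + 1) = ∑ k, v k :=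
          Finset.sum_congr rfl fun k _ => by have := (h1 k).1; omega
        rw [Finset.sum_add_distrib] at he
        simpa [hsum] using he
      simp only [Finset.mem_coe, Finset.mem_piAntidiag]
      exact ⟨by omega, fun i _ => Finset.mem_univ i⟩
    · intro w hw
      simp only [Finset.mem_coe, Finset.mem_piAntidiag] at hw
      obtain ⟨hsum, -⟩ := hw
      have hle : ∀ k, w k ≤ j - b := fun k => hsum ▸ Finset.single_le_sum
        (fun i _ => Nat.zero_le (w i)) (Finset.mem_univ k)
      simp only [Finset.mem_coe, Finset.mem_filter, Fintype.mem_piFinset, Finset.mem_Icc]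
      refine ⟨fun k => ⟨by omega, ?_⟩, ?_⟩
      · have := hle k; omega
      · have hn : ∑ k, (w k + 1) = j := by
          rw [Finset.sum_add_distrib, hsum]; simp; omega
        calc (∑ k, ((w k + 1 : ℕ) : ℤ)) = ((∑ k, (w k + 1) : ℕ) : ℤ) := by push_cast; ring
        _ = (j : ℤ) := by rw [hn]
    · intro v hv
      simp only [Finset.mem_coe, Finset.mem_filter, Fintype.mem_piFinset, Finset.mem_Icc] at hv
      funext k
      show v k - 1 + 1 = v k
      have := (hv.1 k).1
      omega
    · intro w _
      funext k
      show w k + 1 - 1 = w k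
      omega
  rw [extBinom, key, stars_bars]
  clear key
  have h1 : j - b + b - 1 = j - 1 := by omega
  have h2 : j - b = (j - 1) - (b - 1) := by omega
  rw [h1, h2, Nat.choose_symm (by omega)]

theorem stmt6 (a b m : ℕ) (ha : 1 ≤ a) (hb : 1 ≤ b) (hm : 1 ≤ m)
    (h : a ≤ m + b - 1) :
    ∑ j ∈ Finset.Icc b a, extBinom b (j : ℤ) m = a.choose b := by
  have step : ∑ j ∈ Finset.Icc b a, extBinom b (j : ℤ) m
      = ∑ j ∈ Finset.Icc b a, (j - 1).choose (b - 1) := by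
    apply Finset.sum_congr rfl
    intro j hj
    rw [Finset.mem_Icc] at hj
    exact extBinom_eq b m j hb hm hj.1 (le_trans hj.2 h)
  rw [step]
  have himg : Finset.Icc b a = (Finset.Icc (b - 1) (a - 1)).image (· + 1) := by
    rw [Finset.image_add_right_Icc]
    congr 1 <;> omega
  rw [himg, Finset.sum_image (by intro x _ y _ hxy; simpa using hxy)]
  have heq : ∀ i ∈ Finset.Icc (b-1) (a-1), (i + 1 - 1).choose (b - 1) = i.choose (b-1) := by
    intros; simp
  rw [Finset.sum_congr rfl heq, Nat.sum_Icc_choose]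
  congr 1 <;> omega
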